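/- Let (α₁,α₂,α₃) ∈ ℂ³ be strongly non-resonant and let a,b,c ∈ R have no common non-unit divisor (every d ∈ R dividing a, b and c is a unit). Assume the tangency condition α₁x₁a + α₂x₂b + α₃x₃c = 0 and the integrability condition a(∂₂c − ∂₃b) + b(∂₃a − ∂₁c) + c(∂₁b − ∂₂a) = 0. Then there exists a unit u ∈ R such that one of the following holds: (II) there are nonzero complex numbers b₁,b₂,b₃ with a = b₁·x₂x₃·u, b = b₂·x₁x₃·u, c = b₃·x₁x₂·u; or (I) exactly one of a,b,c is zero and, correspondingly, there are nonzero complex numbers b₁,b₂ with: c = 0, a = b₁·x₂·u, b = b₂·x₁·u; or b = 0, a = b₁·x₃·u, c = b₂·x₁·u; or a = 0, b = b₁·x₃·u, c = b₂·x₂·u. (Equivalently, up to a unit, ω = x₁x₂(b₁dx₁/x₁ + b₂dx₂/x₂) up to permutation of coordinates, or ω = x₁x₂x₃(b₁dx₁/x₁ + b₂dx₂/x₂ + b₃dx₃/x₃).) -/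

import Mathlib

open MvPowerSeries

/-- A triple `(α₁, α₂, α₃) ∈ ℂ³` is strongly non-resonant if the only integers
`ℓ₁, ℓ₂, ℓ₃ ∈ ℤ` with `ℓ₁α₁ + ℓ₂α₂ + ℓ₃α₃ = 0` are `ℓ₁ = ℓ₂ = ℓ₃ = 0`. -/
def StronglyNonResonant (α₁ α₂ α₃ : ℂ) : Prop :=
  ∀ l₁ l₂ l₃ : ℤ, (l₁ : ℂ) * α₁ + (l₂ : ℂ) * α₂ + (l₃ : ℂ) * α₃ = 0 →
    l₁ = 0 ∧ l₂ = 0 ∧ l₃ = 0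

/-- Formal partial derivative `∂ᵢ` on multivariate formal power series. -/
noncomputable def pd {n : ℕ} (i : Fin n) (f : MvPowerSeries (Fin n) ℂ) :
    MvPowerSeries (Fin n) ℂ :=
  fun m => ((m i : ℂ) + 1) * MvPowerSeries.coeff (R := ℂ) (m + Finsupp.single i 1) f

namespace DiagNF

abbrev M3 := Fin 3 →₀ ℕ

noncomputable def E (i : Fin 3) : M3 := Finsupp.single i 1

lemma coeff_X_mul (i : Fin 3) (f : MvPowerSeries (Fin 3) ℂ) (m : M3) :
    coeff (R := ℂ) m (X i * f) = if 1 ≤ m i then coeff (R := ℂ) (m - E i) f else 0 := by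
  rw [X, coeff_monomial_mul]
  simp [E, Finsupp.single_le_iff]

lemma coeff_X_mul_add (i : Fin 3) (f : MvPowerSeries (Fin 3) ℂ) (m : M3) :
    coeff (R := ℂ) (m + E i) (X i * f) = coeff (R := ℂ) m f := by
  rw [coeff_X_mul]
  have h : 1 ≤ (m + E i) i := by simp [E]
  rw [if_pos h, add_tsub_cancel_right]

lemma coeff_X_mul_zero (i : Fin 3) (f : MvPowerSeries (Fin 3) ℂ) (m : M3)
    (h : m i = 0) : coeff (R := ℂ) m (X i * f) = 0 := by
  rw [coeff_X_mul, if_neg (by omega)]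

lemma coeff_pd (i : Fin 3) (f : MvPowerSeries (Fin 3) ℂ) (m : M3) :
    coeff (R := ℂ) m (pd i f) = ((m i : ℂ) + 1) * coeff (R := ℂ) (m + Finsupp.single i 1) f := rfl

lemma sub_single_apply_ne (q : M3) (j s : Fin 3) (h : j ≠ s) : (q - E j) s = q s := by
  rw [Finsupp.tsub_apply, E, Finsupp.single_eq_of_ne' h, tsub_zero]

lemma sub_single_apply_self (q : M3) (j : Fin 3) : (q - E j) j = q j - 1 := by
  rw [Finsupp.tsub_apply, E, Finsupp.single_eq_same]

lemma add_single_apply_ne (m : M3) (i s : Fin 3) (h : i ≠ s) : (m + E i) s = m s := by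
  rw [Finsupp.add_apply, E, Finsupp.single_eq_of_ne' h, add_zero]

lemma coeff_P (j k : Fin 3) (hjk : j ≠ k) (f : MvPowerSeries (Fin 3) ℂ) (q : M3) :
    coeff (R := ℂ) q (X j * (X k * pd j f)) = (q j : ℂ) * coeff (R := ℂ) q (X k * f) := by
  by_cases h1 : 1 ≤ q j
  · rw [coeff_X_mul j, if_pos h1]
    by_cases h2 : 1 ≤ q k
    · have h2' : 1 ≤ (q - E j) k := by rw [sub_single_apply_ne q j k hjk]; exact h2
      rw [coeff_X_mul k, if_pos h2', coeff_X_mul k, if_pos h2, coeff_pd]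
      have e1 : ((q - E j - E k) j : ℂ) + 1 = (q j : ℂ) := by
        rw [sub_single_apply_ne _ k j (Ne.symm hjk), sub_single_apply_self]
        rw [Nat.cast_sub h1]; ring
      have e2 : q - E j - E k + Finsupp.single j 1 = q - E k := by
        ext s
        rcases eq_or_ne s j with rfl | hs
        · rw [Finsupp.add_apply, sub_single_apply_ne _ k s (Ne.symm hjk),
            sub_single_apply_self, Finsupp.single_eq_same,
            sub_single_apply_ne _ k s (Ne.symm hjk)]
          omega
        · rw [Finsupp.add_apply, Finsupp.single_eq_of_ne' (Ne.symm hs)]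
          rcases eq_or_ne s k with rfl | hsk
          · rw [sub_single_apply_self, sub_single_apply_self,
              sub_single_apply_ne _ j s (fun h => hs h.symm)]
            omega
          · rw [sub_single_apply_ne _ k s (Ne.symm hsk),
              sub_single_apply_ne _ j s (fun h => hs h.symm),
              sub_single_apply_ne _ k s (Ne.symm hsk)]
            omega
      rw [e1, e2]
    · have hqk : q k = 0 := by omega
      rw [coeff_X_mul_zero k _ _ (by rw [sub_single_apply_ne q j k hjk]; exact hqk),
        coeff_X_mul_zero k _ _ hqk, mul_zero]
  · rw [coeff_X_mul_zero j _ _ (by omega)]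
    have : (q j : ℂ) = 0 := by norm_cast; omega
    rw [this, zero_mul]

lemma ext3 {m n : M3} (h0 : m 0 = n 0) (h1 : m 1 = n 1) (h2 : m 2 = n 2) : m = n := by
  ext s
  fin_cases s <;> assumption

/-- Lexicographic order on exponents. -/
def rlt (m n : M3) : Prop :=
  m 0 < n 0 ∨ (m 0 = n 0 ∧ (m 1 < n 1 ∨ (m 1 = n 1 ∧ m 2 < n 2)))

lemma rlt_wf : WellFounded rlt := by
  have h : Subrelation rlt
      (InvImage (Prod.Lex (· < ·) (Prod.Lex (· < ·) (· < ·)))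
        (fun n : M3 => (n 0, n 1, n 2))) := by
    intro m n hmn
    show Prod.Lex (· < ·) (Prod.Lex (· < ·) (· < ·)) (m 0, m 1, m 2) (n 0, n 1, n 2)
    rcases hmn with h | ⟨h0, h | ⟨h1, h2⟩⟩
    · exact Prod.Lex.left _ _ h
    · rw [show ((m 0 : ℕ), m 1, m 2) = (n 0, m 1, m 2) by rw [h0]]
      exact Prod.Lex.right _ (Prod.Lex.left _ _ h)
    · rw [show ((m 0 : ℕ), m 1, m 2) = (n 0, n 1, m 2) by rw [h0, h1]]
      exact Prod.Lex.right _ (Prod.Lex.right _ h2)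
  exact Subrelation.wf h (InvImage.wf _
    (WellFounded.prod_lex (wellFounded_lt) (WellFounded.prod_lex wellFounded_lt wellFounded_lt)))

lemma rlt_trichot (m n : M3) : rlt m n ∨ m = n ∨ rlt n m := by
  have key : rlt m n ∨ (m 0 = n 0 ∧ m 1 = n 1 ∧ m 2 = n 2) ∨ rlt n m := by
    unfold rlt; omega
  rcases key with h | h | h
  · exact Or.inl h
  · exact Or.inr (Or.inl (ext3 h.1 h.2.1 h.2.2))
  · exact Or.inr (Or.inr h)

lemma rlt_step {p q n₀ n : M3} (hp : ¬ rlt p n₀) (hq : ¬ rlt q n₀)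
    (hsum : p + q = n₀ + n) (hp1 : p ≠ n₀) (hp2 : p ≠ n) :
    rlt p n ∧ rlt q n := by
  have e0 : p 0 + q 0 = n₀ 0 + n 0 := by
    have := congrArg (fun f : M3 => f 0) hsum; simpa using this
  have e1 : p 1 + q 1 = n₀ 1 + n 1 := by
    have := congrArg (fun f : M3 => f 1) hsum; simpa using this
  have e2 : p 2 + q 2 = n₀ 2 + n 2 := by
    have := congrArg (fun f : M3 => f 2) hsum; simpa using this
  have d1 : ¬(p 0 = n₀ 0 ∧ p 1 = n₀ 1 ∧ p 2 = n₀ 2) := fun h => hp1 (ext3 h.1 h.2.1 h.2.2)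
  have d2 : ¬(p 0 = n 0 ∧ p 1 = n 1 ∧ p 2 = n 2) := fun h => hp2 (ext3 h.1 h.2.1 h.2.2)
  unfold rlt at *
  omega

/-- If two vectors are both parallel (in the cross-product sense) to a common
nonzero vector, they are parallel to each other. -/
lemma cross_trans {x0 x1 x2 y0 y1 y2 v0 v1 v2 : ℂ}
    (hx1 : x1 * v2 - x2 * v1 = 0) (hx2 : x2 * v0 - x0 * v2 = 0) (hx3 : x0 * v1 - x1 * v0 = 0)
    (hy1 : y1 * v2 - y2 * v1 = 0) (hy2 : y2 * v0 - y0 * v2 = 0) (hy3 : y0 * v1 - y1 * v0 = 0)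
    (hv : ¬(v0 = 0 ∧ v1 = 0 ∧ v2 = 0)) :
    x1 * y2 - x2 * y1 = 0 ∧ x2 * y0 - x0 * y2 = 0 ∧ x0 * y1 - x1 * y0 = 0 := by
  have hv' : v0 ≠ 0 ∨ v1 ≠ 0 ∨ v2 ≠ 0 := by tauto
  rcases hv' with h | h | h
  · refine ⟨?_, ?_, ?_⟩ <;> apply mul_left_cancel₀ h <;> rw [mul_zero]
    · linear_combination x1 * hy2 + x2 * hy3 + y0 * hx1
    · linear_combination (-x0) * hy2 + y0 * hx2
    · linear_combination (-x0) * hy3 + y0 * hx3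
  · refine ⟨?_, ?_, ?_⟩ <;> apply mul_left_cancel₀ h <;> rw [mul_zero]
    · linear_combination (-x1) * hy1 + y1 * hx1
    · linear_combination x2 * hy3 + x0 * hy1 + y1 * hx2
    · linear_combination (-x1) * hy3 + y1 * hx3
  · refine ⟨?_, ?_, ?_⟩ <;> apply mul_left_cancel₀ h <;> rw [mul_zero]
    · linear_combination (-x2) * hy1 + y2 * hx1
    · linear_combination (-x2) * hy2 + y2 * hx2
    · linear_combination x0 * hy1 + x1 * hy2 + y2 * hx3

/-- The key induction: all the "logarithmic coefficient vectors" of the form are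
parallel to the one at the minimal exponent. -/
theorem parallel (α₁ α₂ α₃ : ℂ) (hres : StronglyNonResonant α₁ α₂ α₃)
    (t0 t1 t2 : M3 → ℂ)
    (hA : ∀ n : M3, α₁ * t0 n + α₂ * t1 n + α₃ * t2 n = 0)
    (hB : ∀ M : M3, ∑ pq ∈ Finset.HasAntidiagonal.antidiagonal M,
        (t0 pq.1 * ((pq.2 1 : ℂ) * t2 pq.2 - (pq.2 2 : ℂ) * t1 pq.2)
          + t1 pq.1 * ((pq.2 2 : ℂ) * t0 pq.2 - (pq.2 0 : ℂ) * t2 pq.2)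
          + t2 pq.1 * ((pq.2 0 : ℂ) * t1 pq.2 - (pq.2 1 : ℂ) * t0 pq.2)) = 0)
    (n₀ : M3) (hn₀ : ¬(t0 n₀ = 0 ∧ t1 n₀ = 0 ∧ t2 n₀ = 0))
    (hmin : ∀ m : M3, rlt m n₀ → (t0 m = 0 ∧ t1 m = 0 ∧ t2 m = 0)) :
    ∀ n : M3, t1 n * t2 n₀ - t2 n * t1 n₀ = 0 ∧ t2 n * t0 n₀ - t0 n * t2 n₀ = 0
      ∧ t0 n * t1 n₀ - t1 n * t0 n₀ = 0 := by
  intro n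
  induction n using rlt_wf.induction with
  | _ n IH =>
  by_cases hz : t0 n = 0 ∧ t1 n = 0 ∧ t2 n = 0
  · obtain ⟨h0, h1, h2⟩ := hz
    rw [h0, h1, h2]; refine ⟨by ring, by ring, by ring⟩
  by_cases he : n = n₀
  · subst he; refine ⟨by ring, by ring, by ring⟩
  have hnn : ¬ rlt n n₀ := fun h => hz (hmin n h)
  set F : M3 × M3 → ℂ := fun pq =>
    t0 pq.1 * ((pq.2 1 : ℂ) * t2 pq.2 - (pq.2 2 : ℂ) * t1 pq.2)
      + t1 pq.1 * ((pq.2 2 : ℂ) * t0 pq.2 - (pq.2 0 : ℂ) * t2 pq.2)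
      + t2 pq.1 * ((pq.2 0 : ℂ) * t1 pq.2 - (pq.2 1 : ℂ) * t0 pq.2) with hF
  have hBM : ∑ pq ∈ Finset.HasAntidiagonal.antidiagonal (n₀ + n), F pq = 0 := hB (n₀ + n)
  have hpairne : ((n₀, n) : M3 × M3) ≠ (n, n₀) := by
    intro h
    exact he ((Prod.mk.injEq _ _ _ _).mp h).1.symm
  have hsub : ({(n₀, n), (n, n₀)} : Finset (M3 × M3)) ⊆ Finset.HasAntidiagonal.antidiagonal (n₀ + n) := by
    intro x hx
    simp only [Finset.mem_insert, Finset.mem_singleton] at hx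
    rcases hx with rfl | rfl <;> rw [Finset.HasAntidiagonal.mem_antidiagonal]
    exact add_comm _ _
  have hvanish : ∀ pq ∈ Finset.HasAntidiagonal.antidiagonal (n₀ + n),
      pq ∉ ({(n₀, n), (n, n₀)} : Finset (M3 × M3)) → F pq = 0 := by
    rintro ⟨p, q⟩ hmem hnotin
    simp only [Finset.mem_insert, Finset.mem_singleton, Prod.mk.injEq, not_or, not_and] at hnotin
    rw [Finset.HasAntidiagonal.mem_antidiagonal] at hmem
    by_cases hp0 : t0 p = 0 ∧ t1 p = 0 ∧ t2 p = 0
    · rw [hF]; simp only [hp0.1, hp0.2.1, hp0.2.2]; ring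
    by_cases hq0 : t0 q = 0 ∧ t1 q = 0 ∧ t2 q = 0
    · rw [hF]; simp only [hq0.1, hq0.2.1, hq0.2.2]; ring
    have hpn₀ : ¬ rlt p n₀ := fun h => hp0 (hmin p h)
    have hqn₀ : ¬ rlt q n₀ := fun h => hq0 (hmin q h)
    have hp1 : p ≠ n₀ := by
      rintro rfl
      exact (hnotin.1 rfl) (add_left_cancel hmem)
    have hp2 : p ≠ n := by
      rintro rfl
      exact (hnotin.2 rfl) (by rw [add_comm] at hmem; exact add_right_cancel hmem)
    obtain ⟨hpn, hqn⟩ := rlt_step hpn₀ hqn₀ hmem hp1 hp2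
    obtain ⟨ep1, ep2, ep3⟩ := IH p hpn
    obtain ⟨eq1, eq2, eq3⟩ := IH q hqn
    obtain ⟨f1, f2, f3⟩ := cross_trans ep1 ep2 ep3 eq1 eq2 eq3 hn₀
    rw [hF]
    simp only
    linear_combination (-(q 0 : ℂ)) * f1 - (q 1 : ℂ) * f2 - (q 2 : ℂ) * f3
  have h2 : F (n₀, n) + F (n, n₀) = 0 := by
    have := Finset.sum_subset hsub hvanish
    rw [hBM] at this
    rw [← Finset.sum_pair hpairne]
    exact this
  rw [hF] at h2
  simp only at h2
  have hx := hA n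
  have hv := hA n₀
  set x0 := t0 n; set x1 := t1 n; set x2 := t2 n
  set v0 := t0 n₀; set v1 := t1 n₀; set v2 := t2 n₀
  set cr0 := x1 * v2 - x2 * v1 with hcr0
  set cr1 := x2 * v0 - x0 * v2 with hcr1
  set cr2 := x0 * v1 - x1 * v0 with hcr2
  have hdot : ((n 0 : ℂ) - (n₀ 0 : ℂ)) * cr0 + ((n 1 : ℂ) - (n₀ 1 : ℂ)) * cr1
      + ((n 2 : ℂ) - (n₀ 2 : ℂ)) * cr2 = 0 := by
    rw [hcr0, hcr1, hcr2]
    linear_combination h2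
  have h01 : cr0 * α₂ - cr1 * α₁ = 0 := by
    rw [hcr0, hcr1]; linear_combination v2 * hx - x2 * hv
  have h12 : cr1 * α₃ - cr2 * α₂ = 0 := by
    rw [hcr1, hcr2]; linear_combination v0 * hx - x0 * hv
  have h20 : cr2 * α₁ - cr0 * α₃ = 0 := by
    rw [hcr2, hcr0]; linear_combination v1 * hx - x1 * hv
  have hlin : ((n 0 : ℂ) - (n₀ 0 : ℂ)) * α₁ + ((n 1 : ℂ) - (n₀ 1 : ℂ)) * α₂
      + ((n 2 : ℂ) - (n₀ 2 : ℂ)) * α₃ ≠ 0 := by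
    intro h
    have := hres ((n 0 : ℤ) - (n₀ 0 : ℤ)) ((n 1 : ℤ) - (n₀ 1 : ℤ)) ((n 2 : ℤ) - (n₀ 2 : ℤ))
      (by push_cast; linear_combination h)
    apply he
    apply ext3 <;> omega
  refine ⟨?_, ?_, ?_⟩
  · by_contra hk
    apply hlin
    have hz1 : cr0 * (((n 0 : ℂ) - (n₀ 0 : ℂ)) * α₁ + ((n 1 : ℂ) - (n₀ 1 : ℂ)) * α₂
        + ((n 2 : ℂ) - (n₀ 2 : ℂ)) * α₃) = 0 := by
      linear_combination α₁ * hdot + ((n 1 : ℂ) - (n₀ 1 : ℂ)) * h01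
        - ((n 2 : ℂ) - (n₀ 2 : ℂ)) * h20
    exact (mul_eq_zero.mp hz1).resolve_left hk
  · by_contra hk
    apply hlin
    have hz1 : cr1 * (((n 0 : ℂ) - (n₀ 0 : ℂ)) * α₁ + ((n 1 : ℂ) - (n₀ 1 : ℂ)) * α₂
        + ((n 2 : ℂ) - (n₀ 2 : ℂ)) * α₃) = 0 := by
      linear_combination α₂ * hdot - ((n 0 : ℂ) - (n₀ 0 : ℂ)) * h01
        + ((n 2 : ℂ) - (n₀ 2 : ℂ)) * h12
    exact (mul_eq_zero.mp hz1).resolve_left hk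
  · by_contra hk
    apply hlin
    have hz1 : cr2 * (((n 0 : ℂ) - (n₀ 0 : ℂ)) * α₁ + ((n 1 : ℂ) - (n₀ 1 : ℂ)) * α₂
        + ((n 2 : ℂ) - (n₀ 2 : ℂ)) * α₃) = 0 := by
      linear_combination α₃ * hdot + ((n 0 : ℂ) - (n₀ 0 : ℂ)) * h20
        - ((n 1 : ℂ) - (n₀ 1 : ℂ)) * h12
    exact (mul_eq_zero.mp hz1).resolve_left hk

lemma addsub2 {m : M3} {i j : Fin 3} (hj : 1 ≤ m j) :
    m - E j + E i + E j = m + E i := by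
  have hle : E j ≤ m := Finsupp.single_le_iff.mpr hj
  rw [add_right_comm, tsub_add_cancel_of_le hle]

lemma addsub3 {m : M3} {i j k : Fin 3} (hjk : j ≠ k)
    (hj : 1 ≤ m j) (hk : 1 ≤ m k) :
    m - E j - E k + E i + E j + E k = m + E i := by
  have hj' : E j ≤ m := Finsupp.single_le_iff.mpr hj
  have hk' : E k ≤ m - E j := Finsupp.single_le_iff.mpr
    (by rw [sub_single_apply_ne m j k hjk]; exact hk)
  rw [add_right_comm (m - E j - E k + E i) (E j) (E k),
      add_right_comm (m - E j - E k) (E i) (E k),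
      tsub_add_cancel_of_le hk',
      add_right_comm (m - E j) (E i) (E j),
      tsub_add_cancel_of_le hj']

lemma build1 (f G : MvPowerSeries (Fin 3) ℂ) (u : M3 → ℂ) (v : ℂ) (i j : Fin 3)
    (hij : i ≠ j)
    (hf : ∀ m : M3, coeff (R := ℂ) m f = u (m + E i) * v)
    (hG : ∀ m : M3, coeff (R := ℂ) m G = u (m + E i + E j))
    (hzj : ∀ n : M3, n j = 0 → u n = 0) :
    f = C (σ := Fin 3) (R := ℂ) v * X j * G := by
  apply MvPowerSeries.ext
  intro m
  rw [hf]
  have hass : C (σ := Fin 3) (R := ℂ) v * X j * G = C (σ := Fin 3) (R := ℂ) v * (X j * G) := by ring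
  rw [hass, coeff_C_mul, coeff_X_mul]
  by_cases hj : 1 ≤ m j
  · rw [if_pos hj, hG, addsub2 hj]
    exact mul_comm _ _
  · rw [if_neg hj]
    have hmj : (m + E i) j = 0 := by rw [add_single_apply_ne m i j hij]; omega
    rw [hzj _ hmj, zero_mul, mul_zero]

lemma build2 (f G : MvPowerSeries (Fin 3) ℂ) (u : M3 → ℂ) (v : ℂ) (i j k : Fin 3)
    (hij : i ≠ j) (hik : i ≠ k) (hjk : j ≠ k)
    (hf : ∀ m : M3, coeff (R := ℂ) m f = u (m + E i) * v)
    (hG : ∀ m : M3, coeff (R := ℂ) m G = u (m + E i + E j + E k))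
    (hzj : ∀ n : M3, n j = 0 → u n = 0)
    (hzk : ∀ n : M3, n k = 0 → u n = 0) :
    f = C (σ := Fin 3) (R := ℂ) v * (X j * X k) * G := by
  apply MvPowerSeries.ext
  intro m
  rw [hf]
  have hass : C (σ := Fin 3) (R := ℂ) v * (X j * X k) * G = C (σ := Fin 3) (R := ℂ) v * (X j * (X k * G)) := by ring
  rw [hass, coeff_C_mul, coeff_X_mul]
  by_cases hj : 1 ≤ m j
  · rw [if_pos hj, coeff_X_mul]
    have hmk : (m - E j) k = m k := sub_single_apply_ne m j k hjk
    by_cases hk : 1 ≤ m k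
    · rw [if_pos (by omega : 1 ≤ (m - E j) k), hG, addsub3 hjk hj hk]
      exact mul_comm _ _
    · rw [if_neg (by omega : ¬ 1 ≤ (m - E j) k)]
      have hmk' : (m + E i) k = 0 := by rw [add_single_apply_ne m i k hik]; omega
      rw [hzk _ hmk', zero_mul, mul_zero]
  · rw [if_neg hj]
    have hmj : (m + E i) j = 0 := by rw [add_single_apply_ne m i j hij]; omega
    rw [hzj _ hmj, zero_mul, mul_zero]

end DiagNF

theorem proposition_diagonal_normal_form (α₁ α₂ α₃ : ℂ)
    (hres : StronglyNonResonant α₁ α₂ α₃)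
    (a b c : MvPowerSeries (Fin 3) ℂ)
    (hcop : ∀ d : MvPowerSeries (Fin 3) ℂ, d ∣ a → d ∣ b → d ∣ c → IsUnit d)
    (htan : C (σ := Fin 3) (R := ℂ) α₁ * X 0 * a + C (σ := Fin 3) (R := ℂ) α₂ * X 1 * b
        + C (σ := Fin 3) (R := ℂ) α₃ * X 2 * c = 0)
    (hint : a * (pd 1 c - pd 2 b) + b * (pd 2 a - pd 0 c)
        + c * (pd 0 b - pd 1 a) = 0) :
    ∃ u : MvPowerSeries (Fin 3) ℂ, IsUnit u ∧
      ((∃ b₁ b₂ b₃ : ℂ, b₁ ≠ 0 ∧ b₂ ≠ 0 ∧ b₃ ≠ 0 ∧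
          a = C (σ := Fin 3) (R := ℂ) b₁ * (X 1 * X 2) * u ∧
          b = C (σ := Fin 3) (R := ℂ) b₂ * (X 0 * X 2) * u ∧
          c = C (σ := Fin 3) (R := ℂ) b₃ * (X 0 * X 1) * u) ∨
        (c = 0 ∧ ∃ b₁ b₂ : ℂ, b₁ ≠ 0 ∧ b₂ ≠ 0 ∧
          a = C (σ := Fin 3) (R := ℂ) b₁ * X 1 * u ∧ b = C (σ := Fin 3) (R := ℂ) b₂ * X 0 * u) ∨
        (b = 0 ∧ ∃ b₁ b₂ : ℂ, b₁ ≠ 0 ∧ b₂ ≠ 0 ∧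
          a = C (σ := Fin 3) (R := ℂ) b₁ * X 2 * u ∧ c = C (σ := Fin 3) (R := ℂ) b₂ * X 0 * u) ∨
        (a = 0 ∧ ∃ b₁ b₂ : ℂ, b₁ ≠ 0 ∧ b₂ ≠ 0 ∧
          b = C (σ := Fin 3) (R := ℂ) b₁ * X 2 * u ∧ c = C (σ := Fin 3) (R := ℂ) b₂ * X 1 * u)) := by
  classical
  have hA : ∀ n : DiagNF.M3, α₁ * coeff (R := ℂ) n (X 0 * a) + α₂ * coeff (R := ℂ) n (X 1 * b)
      + α₃ * coeff (R := ℂ) n (X 2 * c) = 0 := by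
    intro n
    have h := congrArg (coeff (R := ℂ) n) htan
    simpa only [map_add, map_zero, mul_assoc, coeff_C_mul] using h
  have hB : ∀ M : DiagNF.M3, ∑ pq ∈ Finset.HasAntidiagonal.antidiagonal M,
      (coeff (R := ℂ) pq.1 (X 0 * a) * ((pq.2 1 : ℂ) * coeff (R := ℂ) pq.2 (X 2 * c)
          - (pq.2 2 : ℂ) * coeff (R := ℂ) pq.2 (X 1 * b))
        + coeff (R := ℂ) pq.1 (X 1 * b) * ((pq.2 2 : ℂ) * coeff (R := ℂ) pq.2 (X 0 * a)
          - (pq.2 0 : ℂ) * coeff (R := ℂ) pq.2 (X 2 * c))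
        + coeff (R := ℂ) pq.1 (X 2 * c) * ((pq.2 0 : ℂ) * coeff (R := ℂ) pq.2 (X 1 * b)
          - (pq.2 1 : ℂ) * coeff (R := ℂ) pq.2 (X 0 * a))) = 0 := by
    intro M
    have hkey : (X 0 * a) * (X 1 * (X 2 * pd 1 c)) + (X 1 * b) * (X 2 * (X 0 * pd 2 a))
        + (X 2 * c) * (X 0 * (X 1 * pd 0 b))
        = (X 0 * a) * (X 2 * (X 1 * pd 2 b)) + (X 1 * b) * (X 0 * (X 2 * pd 0 c))
          + (X 2 * c) * (X 1 * (X 0 * pd 1 a)) := by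
      have h0 : X 0 * X 1 * X 2 * (a * (pd 1 c - pd 2 b) + b * (pd 2 a - pd 0 c)
          + c * (pd 0 b - pd 1 a)) = 0 := by rw [hint, mul_zero]
      linear_combination h0
    have h6 := congrArg (coeff (R := ℂ) M) hkey
    have e1 : ∀ q : DiagNF.M3, coeff (R := ℂ) q (X 1 * (X 2 * pd 1 c))
        = (q 1 : ℂ) * coeff (R := ℂ) q (X 2 * c) := fun q => DiagNF.coeff_P 1 2 (by decide) c q
    have e2 : ∀ q : DiagNF.M3, coeff (R := ℂ) q (X 2 * (X 0 * pd 2 a))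
        = (q 2 : ℂ) * coeff (R := ℂ) q (X 0 * a) := fun q => DiagNF.coeff_P 2 0 (by decide) a q
    have e3 : ∀ q : DiagNF.M3, coeff (R := ℂ) q (X 0 * (X 1 * pd 0 b))
        = (q 0 : ℂ) * coeff (R := ℂ) q (X 1 * b) := fun q => DiagNF.coeff_P 0 1 (by decide) b q
    have e4 : ∀ q : DiagNF.M3, coeff (R := ℂ) q (X 2 * (X 1 * pd 2 b))
        = (q 2 : ℂ) * coeff (R := ℂ) q (X 1 * b) := fun q => DiagNF.coeff_P 2 1 (by decide) b q
    have e5 : ∀ q : DiagNF.M3, coeff (R := ℂ) q (X 0 * (X 2 * pd 0 c))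
        = (q 0 : ℂ) * coeff (R := ℂ) q (X 2 * c) := fun q => DiagNF.coeff_P 0 2 (by decide) c q
    have e6 : ∀ q : DiagNF.M3, coeff (R := ℂ) q (X 1 * (X 0 * pd 1 a))
        = (q 1 : ℂ) * coeff (R := ℂ) q (X 0 * a) := fun q => DiagNF.coeff_P 1 0 (by decide) a q
    rw [map_add, map_add, map_add, map_add, coeff_mul, coeff_mul, coeff_mul, coeff_mul,
      coeff_mul, coeff_mul] at h6
    simp only [e1, e2, e3, e4, e5, e6] at h6
    rw [← Finset.sum_add_distrib, ← Finset.sum_add_distrib, ← Finset.sum_add_distrib,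
      ← Finset.sum_add_distrib] at h6
    have h8 := sub_eq_zero.mpr h6
    rw [← Finset.sum_sub_distrib] at h8
    refine Eq.trans ?_ h8
    exact Finset.sum_congr rfl fun pq _ => by ring
  by_cases hS : ∃ n : DiagNF.M3, ¬(coeff (R := ℂ) n (X 0 * a) = 0 ∧ coeff (R := ℂ) n (X 1 * b) = 0
      ∧ coeff (R := ℂ) n (X 2 * c) = 0)
  swap
  · push_neg at hS
    exfalso
    have ha : a = 0 := by
      apply MvPowerSeries.ext; intro m
      rw [map_zero, ← DiagNF.coeff_X_mul_add 0 a m]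
      exact (hS (m + DiagNF.E 0)).1
    have hb : b = 0 := by
      apply MvPowerSeries.ext; intro m
      rw [map_zero, ← DiagNF.coeff_X_mul_add 1 b m]
      exact (hS (m + DiagNF.E 1)).2.1
    have hc : c = 0 := by
      apply MvPowerSeries.ext; intro m
      rw [map_zero, ← DiagNF.coeff_X_mul_add 2 c m]
      exact (hS (m + DiagNF.E 2)).2.2
    have hu := hcop (X 0) (by rw [ha]; exact dvd_zero _) (by rw [hb]; exact dvd_zero _)
      (by rw [hc]; exact dvd_zero _)
    have h0 := hu.map (constantCoeff (σ := Fin 3) (R := ℂ))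
    rw [constantCoeff_X] at h0
    exact not_isUnit_zero h0
  obtain ⟨nw, hnw⟩ := hS
  obtain ⟨n₀, hn₀S, hn₀min⟩ := DiagNF.rlt_wf.has_min
    {n : DiagNF.M3 | ¬(coeff (R := ℂ) n (X 0 * a) = 0 ∧ coeff (R := ℂ) n (X 1 * b) = 0
      ∧ coeff (R := ℂ) n (X 2 * c) = 0)} ⟨nw, hnw⟩
  have hmin : ∀ m : DiagNF.M3, DiagNF.rlt m n₀ → (coeff (R := ℂ) m (X 0 * a) = 0
      ∧ coeff (R := ℂ) m (X 1 * b) = 0 ∧ coeff (R := ℂ) m (X 2 * c) = 0) := by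
    intro m hm
    by_contra hcon
    exact hn₀min m hcon hm
  have hpar := DiagNF.parallel α₁ α₂ α₃ hres
    (fun n => coeff (R := ℂ) n (X 0 * a)) (fun n => coeff (R := ℂ) n (X 1 * b))
    (fun n => coeff (R := ℂ) n (X 2 * c)) hA hB n₀ hn₀S hmin
  have hpar' : ∀ n : DiagNF.M3,
      coeff (R := ℂ) n (X 1 * b) * coeff (R := ℂ) n₀ (X 2 * c)
        - coeff (R := ℂ) n (X 2 * c) * coeff (R := ℂ) n₀ (X 1 * b) = 0
      ∧ coeff (R := ℂ) n (X 2 * c) * coeff (R := ℂ) n₀ (X 0 * a)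
        - coeff (R := ℂ) n (X 0 * a) * coeff (R := ℂ) n₀ (X 2 * c) = 0
      ∧ coeff (R := ℂ) n (X 0 * a) * coeff (R := ℂ) n₀ (X 1 * b)
        - coeff (R := ℂ) n (X 1 * b) * coeff (R := ℂ) n₀ (X 0 * a) = 0 := hpar
  set v0 := coeff (R := ℂ) n₀ (X 0 * a) with hv0def
  set v1 := coeff (R := ℂ) n₀ (X 1 * b) with hv1def
  set v2 := coeff (R := ℂ) n₀ (X 2 * c) with hv2def
  have hv : ¬(v0 = 0 ∧ v1 = 0 ∧ v2 = 0) := hn₀S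
  have hαv : α₁ * v0 + α₂ * v1 + α₃ * v2 = 0 := hA n₀
  have hα1 : α₁ ≠ 0 := fun h =>
    one_ne_zero (hres 1 0 0 (by push_cast; rw [h]; ring)).1
  have hα2 : α₂ ≠ 0 := fun h =>
    one_ne_zero (hres 0 1 0 (by push_cast; rw [h]; ring)).2.1
  have hα3 : α₃ ≠ 0 := fun h =>
    one_ne_zero (hres 0 0 1 (by push_cast; rw [h]; ring)).2.2
  by_cases h0 : v0 = 0
  · -- case a = 0
    have h1 : v1 ≠ 0 := by
      intro h1
      have h2 : v2 = 0 := by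
        have h := hαv
        rw [h0, h1] at h
        have h' : α₃ * v2 = 0 := by linear_combination h
        exact (mul_eq_zero.mp h').resolve_left hα3
      exact hv ⟨h0, h1, h2⟩
    have h2 : v2 ≠ 0 := by
      intro h2
      have h1' : v1 = 0 := by
        have h := hαv
        rw [h0, h2] at h
        have h' : α₂ * v1 = 0 := by linear_combination h
        exact (mul_eq_zero.mp h').resolve_left hα2
      exact hv ⟨h0, h1', h2⟩
    -- pivot 1
    set u : DiagNF.M3 → ℂ := fun n => coeff (R := ℂ) n (X 1 * b) / v1 with hudef
    have hu0 : ∀ n : DiagNF.M3, coeff (R := ℂ) n (X 0 * a) = u n * v0 := by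
      intro n
      have h := (hpar' n).2.2
      rw [hudef]
      field_simp
      linear_combination h
    have hu1 : ∀ n : DiagNF.M3, coeff (R := ℂ) n (X 1 * b) = u n * v1 := by
      intro n
      rw [hudef]
      field_simp
    have hu2 : ∀ n : DiagNF.M3, coeff (R := ℂ) n (X 2 * c) = u n * v2 := by
      intro n
      have h := (hpar' n).1
      rw [hudef]
      field_simp
      linear_combination -h
    have ha0 : a = 0 := by
      apply MvPowerSeries.ext; intro m
      rw [map_zero, ← DiagNF.coeff_X_mul_add 0 a m, hu0, h0, mul_zero]
    set G : MvPowerSeries (Fin 3) ℂ := fun m => u (m + DiagNF.E 1 + DiagNF.E 2) with hGdef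
    have hG : ∀ m : DiagNF.M3, coeff (R := ℂ) m G = u (m + DiagNF.E 1 + DiagNF.E 2) := fun m => rfl
    have hz1 : ∀ n : DiagNF.M3, n 1 = 0 → u n = 0 := by
      intro n hn
      have h := hu1 n
      rw [DiagNF.coeff_X_mul_zero 1 b n hn] at h
      exact (mul_eq_zero.mp h.symm).resolve_right h1
    have hz2 : ∀ n : DiagNF.M3, n 2 = 0 → u n = 0 := by
      intro n hn
      have h := hu2 n
      rw [DiagNF.coeff_X_mul_zero 2 c n hn] at h
      exact (mul_eq_zero.mp h.symm).resolve_right h2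
    have hb : b = C (σ := Fin 3) (R := ℂ) v1 * X 2 * G := by
      apply DiagNF.build1 b G u v1 1 2 (by decide)
      · intro m
        rw [← DiagNF.coeff_X_mul_add 1 b m]
        exact hu1 _
      · exact hG
      · exact hz2
    have hc : c = C (σ := Fin 3) (R := ℂ) v2 * X 1 * G := by
      apply DiagNF.build1 c G u v2 2 1 (by decide)
      · intro m
        rw [← DiagNF.coeff_X_mul_add 2 c m]
        exact hu2 _
      · intro m
        rw [hG, add_right_comm]
      · exact hz1
    have hunit : IsUnit G := hcop G (by rw [ha0]; exact dvd_zero _)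
      ⟨C (σ := Fin 3) (R := ℂ) v1 * X 2, by rw [hb]; ring⟩
      ⟨C (σ := Fin 3) (R := ℂ) v2 * X 1, by rw [hc]; ring⟩
    exact ⟨G, hunit, Or.inr (Or.inr (Or.inr ⟨ha0, v1, v2, h1, h2, hb, hc⟩))⟩
  · by_cases h1 : v1 = 0
    · -- case b = 0
      have h2 : v2 ≠ 0 := by
        intro h2
        have h0' : v0 = 0 := by
          have h := hαv
          rw [h1, h2] at h
          have h' : α₁ * v0 = 0 := by linear_combination h
          exact (mul_eq_zero.mp h').resolve_left hα1
        exact h0 h0'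
      set u : DiagNF.M3 → ℂ := fun n => coeff (R := ℂ) n (X 0 * a) / v0 with hudef
      have hu0 : ∀ n : DiagNF.M3, coeff (R := ℂ) n (X 0 * a) = u n * v0 := by
        intro n; rw [hudef]; field_simp
      have hu1 : ∀ n : DiagNF.M3, coeff (R := ℂ) n (X 1 * b) = u n * v1 := by
        intro n
        have h := (hpar' n).2.2
        rw [hudef]
        field_simp
        linear_combination -h
      have hu2 : ∀ n : DiagNF.M3, coeff (R := ℂ) n (X 2 * c) = u n * v2 := by
        intro n
        have h := (hpar' n).2.1
        rw [hudef]
        field_simp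
        linear_combination h
      have hb0 : b = 0 := by
        apply MvPowerSeries.ext; intro m
        rw [map_zero, ← DiagNF.coeff_X_mul_add 1 b m, hu1, h1, mul_zero]
      set G : MvPowerSeries (Fin 3) ℂ := fun m => u (m + DiagNF.E 0 + DiagNF.E 2) with hGdef
      have hG : ∀ m : DiagNF.M3, coeff (R := ℂ) m G = u (m + DiagNF.E 0 + DiagNF.E 2) := fun m => rfl
      have hz0 : ∀ n : DiagNF.M3, n 0 = 0 → u n = 0 := by
        intro n hn
        have h := hu0 n
        rw [DiagNF.coeff_X_mul_zero 0 a n hn] at h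
        exact (mul_eq_zero.mp h.symm).resolve_right h0
      have hz2 : ∀ n : DiagNF.M3, n 2 = 0 → u n = 0 := by
        intro n hn
        have h := hu2 n
        rw [DiagNF.coeff_X_mul_zero 2 c n hn] at h
        exact (mul_eq_zero.mp h.symm).resolve_right h2
      have ha : a = C (σ := Fin 3) (R := ℂ) v0 * X 2 * G := by
        apply DiagNF.build1 a G u v0 0 2 (by decide)
        · intro m
          rw [← DiagNF.coeff_X_mul_add 0 a m]
          exact hu0 _
        · exact hG
        · exact hz2
      have hc : c = C (σ := Fin 3) (R := ℂ) v2 * X 0 * G := by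
        apply DiagNF.build1 c G u v2 2 0 (by decide)
        · intro m
          rw [← DiagNF.coeff_X_mul_add 2 c m]
          exact hu2 _
        · intro m
          rw [hG, add_right_comm]
        · exact hz0
      have hunit : IsUnit G := hcop G
        ⟨C (σ := Fin 3) (R := ℂ) v0 * X 2, by rw [ha]; ring⟩
        (by rw [hb0]; exact dvd_zero _)
        ⟨C (σ := Fin 3) (R := ℂ) v2 * X 0, by rw [hc]; ring⟩
      exact ⟨G, hunit, Or.inr (Or.inr (Or.inl ⟨hb0, v0, v2, h0, h2, ha, hc⟩))⟩
    · by_cases h2 : v2 = 0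
      · -- case c = 0
        set u : DiagNF.M3 → ℂ := fun n => coeff (R := ℂ) n (X 0 * a) / v0 with hudef
        have hu0 : ∀ n : DiagNF.M3, coeff (R := ℂ) n (X 0 * a) = u n * v0 := by
          intro n; rw [hudef]; field_simp
        have hu1 : ∀ n : DiagNF.M3, coeff (R := ℂ) n (X 1 * b) = u n * v1 := by
          intro n
          have h := (hpar' n).2.2
          rw [hudef]
          field_simp
          linear_combination -h
        have hu2 : ∀ n : DiagNF.M3, coeff (R := ℂ) n (X 2 * c) = u n * v2 := by
          intro n
          have h := (hpar' n).2.1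
          rw [hudef]
          field_simp
          linear_combination h
        have hc0 : c = 0 := by
          apply MvPowerSeries.ext; intro m
          rw [map_zero, ← DiagNF.coeff_X_mul_add 2 c m, hu2, h2, mul_zero]
        set G : MvPowerSeries (Fin 3) ℂ := fun m => u (m + DiagNF.E 0 + DiagNF.E 1) with hGdef
        have hG : ∀ m : DiagNF.M3, coeff (R := ℂ) m G = u (m + DiagNF.E 0 + DiagNF.E 1) := fun m => rfl
        have hz0 : ∀ n : DiagNF.M3, n 0 = 0 → u n = 0 := by
          intro n hn
          have h := hu0 n
          rw [DiagNF.coeff_X_mul_zero 0 a n hn] at h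
          exact (mul_eq_zero.mp h.symm).resolve_right h0
        have hz1 : ∀ n : DiagNF.M3, n 1 = 0 → u n = 0 := by
          intro n hn
          have h := hu1 n
          rw [DiagNF.coeff_X_mul_zero 1 b n hn] at h
          exact (mul_eq_zero.mp h.symm).resolve_right h1
        have ha : a = C (σ := Fin 3) (R := ℂ) v0 * X 1 * G := by
          apply DiagNF.build1 a G u v0 0 1 (by decide)
          · intro m
            rw [← DiagNF.coeff_X_mul_add 0 a m]
            exact hu0 _
          · exact hG
          · exact hz1
        have hb : b = C (σ := Fin 3) (R := ℂ) v1 * X 0 * G := by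
          apply DiagNF.build1 b G u v1 1 0 (by decide)
          · intro m
            rw [← DiagNF.coeff_X_mul_add 1 b m]
            exact hu1 _
          · intro m
            rw [hG, add_right_comm]
          · exact hz0
        have hunit : IsUnit G := hcop G
          ⟨C (σ := Fin 3) (R := ℂ) v0 * X 1, by rw [ha]; ring⟩
          ⟨C (σ := Fin 3) (R := ℂ) v1 * X 0, by rw [hb]; ring⟩
          (by rw [hc0]; exact dvd_zero _)
        exact ⟨G, hunit, Or.inr (Or.inl ⟨hc0, v0, v1, h0, h1, ha, hb⟩)⟩
      · -- case II : all nonzero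
        set u : DiagNF.M3 → ℂ := fun n => coeff (R := ℂ) n (X 0 * a) / v0 with hudef
        have hu0 : ∀ n : DiagNF.M3, coeff (R := ℂ) n (X 0 * a) = u n * v0 := by
          intro n; rw [hudef]; field_simp
        have hu1 : ∀ n : DiagNF.M3, coeff (R := ℂ) n (X 1 * b) = u n * v1 := by
          intro n
          have h := (hpar' n).2.2
          rw [hudef]
          field_simp
          linear_combination -h
        have hu2 : ∀ n : DiagNF.M3, coeff (R := ℂ) n (X 2 * c) = u n * v2 := by
          intro n
          have h := (hpar' n).2.1
          rw [hudef]
          field_simp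
          linear_combination h
        set G : MvPowerSeries (Fin 3) ℂ :=
          fun m => u (m + DiagNF.E 0 + DiagNF.E 1 + DiagNF.E 2) with hGdef
        have hG : ∀ m : DiagNF.M3, coeff (R := ℂ) m G
            = u (m + DiagNF.E 0 + DiagNF.E 1 + DiagNF.E 2) := fun m => rfl
        have hz0 : ∀ n : DiagNF.M3, n 0 = 0 → u n = 0 := by
          intro n hn
          have h := hu0 n
          rw [DiagNF.coeff_X_mul_zero 0 a n hn] at h
          exact (mul_eq_zero.mp h.symm).resolve_right h0
        have hz1 : ∀ n : DiagNF.M3, n 1 = 0 → u n = 0 := by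
          intro n hn
          have h := hu1 n
          rw [DiagNF.coeff_X_mul_zero 1 b n hn] at h
          exact (mul_eq_zero.mp h.symm).resolve_right h1
        have hz2 : ∀ n : DiagNF.M3, n 2 = 0 → u n = 0 := by
          intro n hn
          have h := hu2 n
          rw [DiagNF.coeff_X_mul_zero 2 c n hn] at h
          exact (mul_eq_zero.mp h.symm).resolve_right h2
        have ha : a = C (σ := Fin 3) (R := ℂ) v0 * (X 1 * X 2) * G := by
          apply DiagNF.build2 a G u v0 0 1 2 (by decide) (by decide) (by decide)
          · intro m
            rw [← DiagNF.coeff_X_mul_add 0 a m]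
            exact hu0 _
          · exact hG
          · exact hz1
          · exact hz2
        have hb : b = C (σ := Fin 3) (R := ℂ) v1 * (X 0 * X 2) * G := by
          apply DiagNF.build2 b G u v1 1 0 2 (by decide) (by decide) (by decide)
          · intro m
            rw [← DiagNF.coeff_X_mul_add 1 b m]
            exact hu1 _
          · intro m
            rw [hG, add_right_comm m (DiagNF.E 0) (DiagNF.E 1)]
          · exact hz0
          · exact hz2
        have hc : c = C (σ := Fin 3) (R := ℂ) v2 * (X 0 * X 1) * G := by
          apply DiagNF.build2 c G u v2 2 0 1 (by decide) (by decide) (by decide)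
          · intro m
            rw [← DiagNF.coeff_X_mul_add 2 c m]
            exact hu2 _
          · intro m
            rw [hG, add_right_comm (m + DiagNF.E 0) (DiagNF.E 1) (DiagNF.E 2),
              add_right_comm m (DiagNF.E 0) (DiagNF.E 2)]
          · exact hz0
          · exact hz1
        have hunit : IsUnit G := hcop G
          ⟨C (σ := Fin 3) (R := ℂ) v0 * (X 1 * X 2), by rw [ha]; ring⟩
          ⟨C (σ := Fin 3) (R := ℂ) v1 * (X 0 * X 2), by rw [hb]; ring⟩
          ⟨C (σ := Fin 3) (R := ℂ) v2 * (X 0 * X 1), by rw [hc]; ring⟩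
        exact ⟨G, hunit, Or.inl ⟨v0, v1, v2, h0, h1, h2, ha, hb, hc⟩⟩
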